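/- Let μ be a minimal finite positive Radon Borel measure on K. Then: (i) c·μ is minimal for every c ≥ 0; (ii) if λ is a finite positive Radon Borel measure on K with 0 ≤ λ ≤ μ (as measures), then λ is minimal; (iii) for every Borel set E ⊆ K, the restriction μ|E is minimal. -/

import Mathlib

open MeasureTheory

/-- `Wt M` is the set `W = {(x,y) ∈ M × M : x ≠ y}`, a topological subspace of `M × M`. -/
abbrev Wt (M : Type*) [MetricSpace M] := {p : M × M // p.1 ≠ p.2}

/-- `g : W → ℝ` satisfies the G-inequality. -/
def GIneq {M : Type*} [MetricSpace M] (g : Wt M → ℝ) : Prop :=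
  ∀ (x u y : M) (hxu : x ≠ u) (huy : u ≠ y) (hxy : x ≠ y),
    dist x y * g ⟨(x, y), hxy⟩ ≤ dist x u * g ⟨(x, u), hxu⟩ + dist u y * g ⟨(u, y), huy⟩

/-- The cone `G` of continuous functions on `K = βW` satisfying the G-inequality
on points of `W`. -/
def GSet (M : Type*) [MetricSpace M] : Set (StoneCech (Wt M) → ℝ) :=
  {g | Continuous g ∧ GIneq fun p => g (stoneCechUnit p)}

/-- The Choquet-like quasi-order `μ ≼ ν`. -/
def Preceq {M : Type*} [MetricSpace M] [MeasurableSpace (StoneCech (Wt M))]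
    (μ ν : Measure (StoneCech (Wt M))) : Prop :=
  ∀ g ∈ GSet M, ∫ ζ, g ζ ∂μ ≤ ∫ ζ, g ζ ∂ν

/-- `μ` is `≼`-minimal among finite positive Radon Borel measures. -/
def IsMinimal {M : Type*} [MetricSpace M] [MeasurableSpace (StoneCech (Wt M))]
    (μ : Measure (StoneCech (Wt M))) : Prop :=
  ∀ ν : Measure (StoneCech (Wt M)),
    IsFiniteMeasure ν → ν.InnerRegular → Preceq ν μ → Preceq μ ν

section Aux

variable {α : Type*} [TopologicalSpace α] [MeasurableSpace α]

lemma aux_innerRegular_of_diff (τ : Measure α)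
    (hfin : ∀ E : Set α, τ E ≠ ⊤)
    (h : ∀ E : Set α, MeasurableSet E → ∀ ε : ENNReal, ε ≠ 0 →
      ∃ K, K ⊆ E ∧ IsCompact K ∧ τ (E \ K) < ε) : τ.InnerRegular := by
  constructor
  intro U hU r hr
  have hUfin : τ U ≠ ⊤ := hfin U
  have hε0 : τ U - r ≠ 0 := by
    simpa [tsub_eq_zero_iff_le] using not_le.mpr hr
  have hεtop : τ U - r ≠ ⊤ := ne_top_of_le_ne_top hUfin tsub_le_self
  obtain ⟨K, hKU, hKc, hlt⟩ := h U hU (τ U - r) hε0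
  refine ⟨K, hKU, hKc, ?_⟩
  have h1 : τ U ≤ τ K + τ (U \ K) := by
    refine (measure_mono ?_).trans (measure_union_le _ _)
    intro x hx
    by_cases hxK : x ∈ K
    · exact Or.inl hxK
    · exact Or.inr ⟨hx, hxK⟩
  have h2 : τ U < τ K + (τ U - r) :=
    lt_of_le_of_lt h1 (ENNReal.add_lt_add_left (hfin K) hlt)
  have h3 : r + (τ U - r) = τ U := add_tsub_cancel_of_le hr.le
  have h4 : r + (τ U - r) < τ K + (τ U - r) := by rw [h3]; exact h2
  exact (ENNReal.add_lt_add_iff_right hεtop).mp h4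

lemma aux_diff [T2Space α] [OpensMeasurableSpace α] (μ : Measure α) [IsFiniteMeasure μ]
    [μ.InnerRegular] (E : Set α) (hE : MeasurableSet E) (ε : ENNReal) (hε : ε ≠ 0) :
    ∃ K, K ⊆ E ∧ IsCompact K ∧ μ (E \ K) < ε := by
  obtain ⟨K, hKE, hKc, h⟩ := hE.exists_isCompact_diff_lt (measure_ne_top μ E) hε
  exact ⟨K, hKE, hKc, h⟩

lemma aux_finite_of_le {τ μ : Measure α} [IsFiniteMeasure μ] (hle : τ ≤ μ) :
    IsFiniteMeasure τ :=
  ⟨lt_of_le_of_lt (Measure.le_iff'.1 hle Set.univ) (measure_lt_top μ _)⟩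

lemma aux_innerRegular_of_le [T2Space α] [OpensMeasurableSpace α] {τ μ : Measure α}
    [IsFiniteMeasure μ] [μ.InnerRegular] (hle : τ ≤ μ) : τ.InnerRegular := by
  refine aux_innerRegular_of_diff τ
    (fun E => ne_top_of_le_ne_top (measure_ne_top μ E) (Measure.le_iff'.1 hle E)) ?_
  intro E hE ε hε
  obtain ⟨K, hKE, hKc, h⟩ := aux_diff μ E hE ε hε
  exact ⟨K, hKE, hKc, lt_of_le_of_lt (Measure.le_iff'.1 hle _) h⟩

lemma aux_innerRegular_add [T2Space α] [OpensMeasurableSpace α] (ν ρ : Measure α)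
    [IsFiniteMeasure ν] [IsFiniteMeasure ρ] [ν.InnerRegular] [ρ.InnerRegular] :
    (ν + ρ).InnerRegular := by
  refine aux_innerRegular_of_diff _ (fun E => measure_ne_top _ E) ?_
  intro E hE ε hε
  have hε2 : ε / 2 ≠ 0 := (ENNReal.half_pos hε).ne'
  obtain ⟨K₁, hK₁E, hK₁c, h₁⟩ := aux_diff ν E hE (ε / 2) hε2
  obtain ⟨K₂, hK₂E, hK₂c, h₂⟩ := aux_diff ρ E hE (ε / 2) hε2
  refine ⟨K₁ ∪ K₂, Set.union_subset hK₁E hK₂E, hK₁c.union hK₂c, ?_⟩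
  have hν : ν (E \ (K₁ ∪ K₂)) < ε / 2 :=
    lt_of_le_of_lt (measure_mono (Set.diff_subset_diff_right Set.subset_union_left)) h₁
  have hρ : ρ (E \ (K₁ ∪ K₂)) < ε / 2 :=
    lt_of_le_of_lt (measure_mono (Set.diff_subset_diff_right Set.subset_union_right)) h₂
  calc (ν + ρ) (E \ (K₁ ∪ K₂)) = ν (E \ (K₁ ∪ K₂)) + ρ (E \ (K₁ ∪ K₂)) := by
        simp [Measure.add_apply]
    _ < ε / 2 + ε / 2 := ENNReal.add_lt_add hν hρ
    _ = ε := ENNReal.add_halves ε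

lemma aux_integrable [CompactSpace α] [OpensMeasurableSpace α] {g : α → ℝ}
    (hg : Continuous g) (τ : Measure α) [IsFiniteMeasure τ] : Integrable g τ :=
  hg.integrable_of_hasCompactSupport
    (isCompact_univ.of_isClosed_subset (isClosed_tsupport g) (Set.subset_univ _))

end Aux

lemma one_mem_GSet (M : Type*) [MetricSpace M] : (fun _ => (1 : ℝ)) ∈ GSet M := by
  refine ⟨continuous_const, fun x u y hxu huy hxy => ?_⟩
  simpa using dist_triangle x u y

lemma isMinimal_zero {M : Type*} [MetricSpace M] [MeasurableSpace (StoneCech (Wt M))] :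
    IsMinimal (0 : Measure (StoneCech (Wt M))) := by
  intro ν hf hr hν
  have h1 := hν (fun _ => (1 : ℝ)) (one_mem_GSet M)
  rw [integral_zero_measure] at h1
  rw [integral_const] at h1
  have huniv : ν Set.univ = 0 := by
    have hge : (0 : ℝ) ≤ (ν Set.univ).toReal := ENNReal.toReal_nonneg
    have : (ν Set.univ).toReal = 0 := le_antisymm (by simp at h1; exact h1) hge
    rw [ENNReal.toReal_eq_zero_iff] at this
    exact this.resolve_right (measure_ne_top ν _)
  have : ν = 0 := Measure.measure_univ_eq_zero.mp huniv
  intro g hg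
  rw [this]

lemma isMinimal_of_le {M : Type*} [MetricSpace M]
    [MeasurableSpace (StoneCech (Wt M))] [BorelSpace (StoneCech (Wt M))]
    (μ : Measure (StoneCech (Wt M))) [IsFiniteMeasure μ] [μ.InnerRegular]
    (hmin : IsMinimal μ) (lam : Measure (StoneCech (Wt M)))
    (hfl : IsFiniteMeasure lam) (hle : lam ≤ μ) : IsMinimal lam := by
  intro ν hfν hrν hν
  set ρ : Measure (StoneCech (Wt M)) := μ - lam with hρ
  have hρle : ρ ≤ μ := Measure.sub_le
  have hρfin : IsFiniteMeasure ρ := aux_finite_of_le hρle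
  have hρreg : ρ.InnerRegular := aux_innerRegular_of_le hρle
  have hsum : ρ + lam = μ := Measure.sub_add_cancel_of_le hle
  have hνρfin : IsFiniteMeasure (ν + ρ) := by infer_instance
  have hνρreg : (ν + ρ).InnerRegular := aux_innerRegular_add ν ρ
  have hpre : Preceq (ν + ρ) μ := by
    intro g hg
    have hiν : Integrable g ν := aux_integrable hg.1 ν
    have hiρ : Integrable g ρ := aux_integrable hg.1 ρ
    have hilam : Integrable g lam := aux_integrable hg.1 lam
    rw [integral_add_measure hiν hiρ]
    have hμeq : ∫ ζ, g ζ ∂μ = ∫ ζ, g ζ ∂lam + ∫ ζ, g ζ ∂ρ := by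
      rw [← integral_add_measure hilam hiρ, add_comm lam ρ, hsum]
    rw [hμeq]
    exact add_le_add (hν g hg) le_rfl
  have h := hmin (ν + ρ) hνρfin hνρreg hpre
  intro g hg
  have hiν : Integrable g ν := aux_integrable hg.1 ν
  have hiρ : Integrable g ρ := aux_integrable hg.1 ρ
  have hilam : Integrable g lam := aux_integrable hg.1 lam
  have h2 := h g hg
  rw [integral_add_measure hiν hiρ, ← hsum, add_comm ρ lam,
    integral_add_measure hilam hiρ] at h2
  exact le_of_add_le_add_right h2

theorem stmt14 {M : Type*} [MetricSpace M]
    [MeasurableSpace (StoneCech (Wt M))] [BorelSpace (StoneCech (Wt M))]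
    (h3 : ∃ x y z : M, x ≠ y ∧ x ≠ z ∧ y ≠ z)
    (μ : Measure (StoneCech (Wt M))) [IsFiniteMeasure μ] [μ.InnerRegular]
    (hmin : IsMinimal μ) :
    (∀ c : NNReal, IsMinimal (c • μ)) ∧
    (∀ lam : Measure (StoneCech (Wt M)), IsFiniteMeasure lam → lam.InnerRegular →
      lam ≤ μ → IsMinimal lam) ∧
    (∀ E : Set (StoneCech (Wt M)), MeasurableSet E → IsMinimal (μ.restrict E)) := by
  refine ⟨?_, ?_, ?_⟩
  · intro c
    rcases eq_or_ne c 0 with rfl | hc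
    · simpa [zero_smul] using (isMinimal_zero (M := M))
    · intro ν hfν hrν hν
      haveI := hfν; haveI := hrν
      have hcR : (0 : ℝ) < (c : ℝ) := NNReal.coe_pos.mpr (pos_iff_ne_zero.mpr hc)
      haveI hfν' : IsFiniteMeasure (c⁻¹ • ν) := by
        constructor
        rw [Measure.smul_apply, ENNReal.smul_def, smul_eq_mul]
        exact ENNReal.mul_lt_top ENNReal.coe_lt_top (measure_lt_top ν _)
      haveI hrν' : (c⁻¹ • ν).InnerRegular := by infer_instance
      have hpre : Preceq (c⁻¹ • ν) μ := by
        intro g hg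
        have h1 := hν g hg
        rw [integral_smul_nnreal_measure] at h1
        rw [integral_smul_nnreal_measure]
        simp only [NNReal.smul_def, NNReal.coe_inv, smul_eq_mul] at h1 ⊢
        rw [inv_mul_le_iff₀ hcR]
        exact h1
      have h := hmin (c⁻¹ • ν) hfν' hrν' hpre
      intro g hg
      have h2 := h g hg
      rw [integral_smul_nnreal_measure] at h2
      rw [integral_smul_nnreal_measure]
      simp only [NNReal.smul_def, NNReal.coe_inv, smul_eq_mul] at h2 ⊢
      calc (c : ℝ) * ∫ ζ, g ζ ∂μ ≤ (c : ℝ) * ((c : ℝ)⁻¹ * ∫ ζ, g ζ ∂ν) :=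
            mul_le_mul_of_nonneg_left h2 hcR.le
        _ = ∫ ζ, g ζ ∂ν := by rw [← mul_assoc, mul_inv_cancel₀ hcR.ne', one_mul]
  · intro lam hf hr hle
    haveI := hf; haveI := hr
    exact isMinimal_of_le μ hmin lam hf hle
  · intro E hE
    exact isMinimal_of_le μ hmin (μ.restrict E) inferInstance Measure.restrict_le_self
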